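/- A ring R is GNC if and only if J(R) is nil and R/J(R) is GNC. -/

import Mathlib

/-- An element is nil-clean if it is the sum of an idempotent and a nilpotent. -/
def IsNilClean {R : Type*} [Ring R] (a : R) : Prop :=
  ∃ e q : R, IsIdempotentElem e ∧ IsNilpotent q ∧ a = e + q

/-- A ring is GNC (generalized nil-clean) if every non-unit is nil-clean. -/
def IsGNC (R : Type*) [Ring R] : Prop :=
  ∀ a : R, ¬ IsUnit a → IsNilClean a

section Aux

variable {R : Type*} [Ring R]

private lemma aux_left_inv {x : R} (hx : x ∈ (⊥ : Ideal R).jacobson) :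
    ∃ z : R, z * (1 + x) = 1 ∧ z - 1 ∈ (⊥ : Ideal R).jacobson := by
  obtain ⟨z, hz⟩ := Ideal.mem_jacobson_iff.1 hx 1
  rw [Ideal.mem_bot] at hz
  rw [mul_one] at hz
  have hzx : z * x + z = 1 := by
    have := sub_eq_zero.mp hz
    rwa [sub_eq_zero] at hz
  have hz1 : z * (1 + x) = 1 := by
    rw [mul_add, mul_one, add_comm]; exact hzx
  refine ⟨z, hz1, ?_⟩
  have : z - 1 = -(z * x) := by
    have h0 : z * x + (z - 1) = 0 := by rw [← add_sub_assoc]; exact hz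
    exact eq_neg_of_add_eq_zero_right h0
  rw [this]
  exact neg_mem (Ideal.mul_mem_left _ _ hx)

/-- `1 + x` is a unit when `x` is in the Jacobson radical. -/
lemma isUnit_one_add_of_mem_jacobson {x : R} (hx : x ∈ (⊥ : Ideal R).jacobson) :
    IsUnit (1 + x) := by
  obtain ⟨z, hz1, hz2⟩ := aux_left_inv hx
  obtain ⟨w, hw1, -⟩ := aux_left_inv hz2
  rw [add_sub_cancel] at hw1
  have hwe : w = 1 + x := by
    calc w = w * (z * (1 + x)) := by rw [hz1, mul_one]
    _ = (w * z) * (1 + x) := by rw [mul_assoc]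
    _ = 1 + x := by rw [hw1, one_mul]
  exact ⟨⟨1 + x, z, by rw [← hwe]; exact hw1, hz1⟩, rfl⟩

/-- An idempotent in the Jacobson radical is zero. -/
lemma eq_zero_of_isIdempotentElem_mem_jacobson {e : R} (he : IsIdempotentElem e)
    (hmem : e ∈ (⊥ : Ideal R).jacobson) : e = 0 := by
  have hu : IsUnit (1 + -e) := isUnit_one_add_of_mem_jacobson (neg_mem hmem)
  have h0 : e * (1 + -e) = 0 := by
    rw [mul_add, mul_one, mul_neg, he.eq, add_neg_cancel]
  calc e = e * (1 + -e) * ↑hu.unit⁻¹ := by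
        rw [mul_assoc]
        rw [show ((1 : R) + -e) * ↑hu.unit⁻¹ = 1 from hu.mul_val_inv, mul_one]
    _ = 0 := by rw [h0, zero_mul]

/-- An element whose left and right "defects of invertibility" lie in the Jacobson radical
is a unit. -/
lemma isUnit_of_mul_sub_one_mem_jacobson {a b : R}
    (h1 : a * b - 1 ∈ (⊥ : Ideal R).jacobson) (h2 : b * a - 1 ∈ (⊥ : Ideal R).jacobson) :
    IsUnit a := by
  have hab : IsUnit (a * b) := by
    have := isUnit_one_add_of_mem_jacobson h1
    rwa [add_sub_cancel] at this
  have hba : IsUnit (b * a) := by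
    have := isUnit_one_add_of_mem_jacobson h2
    rwa [add_sub_cancel] at this
  -- a has right inverse b * (ab)⁻¹ and left inverse (ba)⁻¹ * b
  have hr : a * (b * ↑hab.unit⁻¹) = 1 := by
    rw [← mul_assoc]; exact hab.mul_val_inv
  have hl : (↑hba.unit⁻¹ * b) * a = 1 := by
    rw [mul_assoc]; exact hba.val_inv_mul
  have : ↑hba.unit⁻¹ * b = b * ↑hab.unit⁻¹ := by
    calc ↑hba.unit⁻¹ * b = (↑hba.unit⁻¹ * b) * (a * (b * ↑hab.unit⁻¹)) := by rw [hr, mul_one]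
    _ = ((↑hba.unit⁻¹ * b) * a) * (b * ↑hab.unit⁻¹) := by simp only [mul_assoc]
    _ = b * ↑hab.unit⁻¹ := by rw [hl, one_mul]
  exact ⟨⟨a, b * ↑hab.unit⁻¹, hr, this ▸ hl⟩, rfl⟩

end Aux

theorem gnc_iff_jacobson_nil_and_quotient_gnc {R : Type*} [Ring R] :
    IsGNC R ↔
      ((∀ x ∈ ((⊥ : Ideal R).jacobson), IsNilpotent x) ∧
        IsGNC ((⊥ : TwoSidedIdeal R).jacobson.ringCon.Quotient)) := by
  set J : TwoSidedIdeal R := (⊥ : TwoSidedIdeal R).jacobson with hJ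
  set f : R →+* J.ringCon.Quotient := RingCon.mk' J.ringCon with hf
  have hsurj : Function.Surjective f := Quotient.mk''_surjective
  -- membership in J coincides with membership in the (left) Jacobson radical of ⊥
  have hmemJ : ∀ x : R, x ∈ J ↔ x ∈ (⊥ : Ideal R).jacobson := by
    intro x
    have : TwoSidedIdeal.asIdeal J = (TwoSidedIdeal.asIdeal (⊥ : TwoSidedIdeal R)).jacobson :=
      TwoSidedIdeal.asIdeal_jacobson _
    have hbot : TwoSidedIdeal.asIdeal (⊥ : TwoSidedIdeal R) = (⊥ : Ideal R) := by
      ext y; simp [TwoSidedIdeal.mem_asIdeal]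
    rw [hbot] at this
    constructor
    · intro hx
      have : x ∈ TwoSidedIdeal.asIdeal J := by rwa [TwoSidedIdeal.mem_asIdeal]
      rwa [‹TwoSidedIdeal.asIdeal J = _›] at this
    · intro hx
      have : x ∈ TwoSidedIdeal.asIdeal J := by
        rwa [‹TwoSidedIdeal.asIdeal J = _›]
      rwa [TwoSidedIdeal.mem_asIdeal] at this
  have hker : ∀ x : R, f x = 0 ↔ x ∈ J := by
    intro x
    have h0 : (f 0 : J.ringCon.Quotient) = 0 := map_zero f
    constructor
    · intro h
      have : J.ringCon x 0 := by
        rw [← RingCon.eq]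
        exact h.trans h0.symm
      rw [TwoSidedIdeal.rel_iff, sub_zero] at this
      exact this
    · intro h
      have : J.ringCon x 0 := by rw [TwoSidedIdeal.rel_iff, sub_zero]; exact h
      exact (RingCon.eq _).2 this |>.trans h0
  constructor
  · rintro hGNC
    constructor
    · -- J(R) is nil
      intro x hx
      by_cases hu : IsUnit x
      · -- then 1 ∈ J(R), forcing R trivial
        have h1 : (1 : R) ∈ (⊥ : Ideal R).jacobson := by
          have := Ideal.mul_mem_left _ (↑hu.unit⁻¹) hx
          rwa [hu.val_inv_mul] at this
        have : IsUnit (1 + (-1 : R)) :=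
          isUnit_one_add_of_mem_jacobson (neg_mem h1)
        rw [add_neg_cancel] at this
        have h01 : (0 : R) = 1 := isUnit_zero_iff.mp this
        have : Subsingleton R := subsingleton_of_zero_eq_one h01
        exact ⟨1, by rw [pow_one]; exact Subsingleton.elim _ _⟩
      · obtain ⟨e, q, he, hq, hx'⟩ := hGNC x hu
        -- f e is idempotent and nilpotent, hence 0, so e ∈ J, so e = 0
        have hxJ : x ∈ J := (hmemJ x).2 hx
        have hfx : f x = 0 := (hker x).2 hxJ
        have hfe : f e = - f q := by
          have h0 : f e + f q = 0 := by rw [← map_add, ← hx', hfx]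
          exact eq_neg_of_add_eq_zero_left h0
        have hfe_idem : IsIdempotentElem (f e) := by
          unfold IsIdempotentElem
          rw [← map_mul, he.eq]
        have hfe_nil : IsNilpotent (f e) := by
          rw [hfe]; exact (hq.map f).neg
        have hfe0 : f e = 0 := hfe_idem.eq_zero_of_isNilpotent hfe_nil
        have heJ : e ∈ (⊥ : Ideal R).jacobson := (hmemJ e).1 ((hker e).1 hfe0)
        have he0 : e = 0 := eq_zero_of_isIdempotentElem_mem_jacobson he heJ
        rw [hx', he0, zero_add]
        exact hq
    · -- quotient is GNC
      intro A hA
      obtain ⟨a, rfl⟩ := hsurj A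
      have ha : ¬ IsUnit a := fun h => hA (h.map f)
      obtain ⟨e, q, he, hq, ha'⟩ := hGNC a ha
      refine ⟨f e, f q, ?_, hq.map f, by rw [ha', map_add]⟩
      unfold IsIdempotentElem
      rw [← map_mul, he.eq]
  · rintro ⟨hnil, hGNC⟩ a ha
    -- image of a is not a unit
    have hfa : ¬ IsUnit (f a) := by
      intro h
      apply ha
      obtain ⟨b, hb⟩ := hsurj ↑h.unit⁻¹
      have h1 : f (a * b) = 1 := by rw [map_mul, hb]; exact h.mul_val_inv
      have h2 : f (b * a) = 1 := by rw [map_mul, hb]; exact h.val_inv_mul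
      have m1 : a * b - 1 ∈ (⊥ : Ideal R).jacobson := by
        rw [← hmemJ, ← hker, map_sub, h1, map_one, sub_self]
      have m2 : b * a - 1 ∈ (⊥ : Ideal R).jacobson := by
        rw [← hmemJ, ← hker, map_sub, h2, map_one, sub_self]
      exact isUnit_of_mul_sub_one_mem_jacobson m1 m2
    obtain ⟨E, Q, hE, hQ, hEQ⟩ := hGNC (f a) hfa
    -- lift the idempotent E along the nil kernel
    have hkernil : ∀ x ∈ RingHom.ker f, IsNilpotent x := by
      intro x hx
      rw [RingHom.mem_ker] at hx
      exact hnil x ((hmemJ x).1 ((hker x).1 hx))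
    obtain ⟨r, hr⟩ := hsurj E
    obtain ⟨e, he, hfe⟩ := exists_isIdempotentElem_eq_of_ker_isNilpotent f hkernil E
      ⟨r, hr⟩ hE
    refine ⟨e, a - e, he, ?_, by abel⟩
    -- a - e is nilpotent
    have hfq : f (a - e) = Q := by rw [map_sub, hfe, hEQ]; abel
    obtain ⟨n, hn⟩ := hQ
    have : (a - e) ^ n ∈ J := by
      rw [← hker, map_pow, hfq, hn]
    obtain ⟨m, hm⟩ := hnil _ ((hmemJ _).1 this)
    exact ⟨n * m, by rw [pow_mul, hm]⟩
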